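/- The function H(y) = tanh(y/√2) is, up to sign, the unique bounded odd solution of -H'' = H - H³ that is not identically zero and tends to 1 at +∞. -/

import Mathlib

open Filter

lemma tanh_hasDerivAt' (x : ℝ) : HasDerivAt Real.tanh (1 - Real.tanh x ^ 2) x := by
  have hc : Real.cosh x ≠ 0 := (Real.cosh_pos x).ne'
  have h := (Real.hasDerivAt_sinh x).div (Real.hasDerivAt_cosh x) hc
  have heq : (Real.sinh / Real.cosh) = Real.tanh := by
    funext y; rw [Pi.div_apply, Real.tanh_eq_sinh_div_cosh]
  rw [heq] at h
  refine h.congr_deriv (Eq.symm ?_)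
  have h1 : Real.cosh x ^ 2 - Real.sinh x ^ 2 = 1 := Real.cosh_sq_sub_sinh_sq x
  rw [Real.tanh_eq_sinh_div_cosh]
  field_simp

lemma tanh_sq_lt_one' (x : ℝ) : Real.tanh x ^ 2 < 1 := by
  have hc := Real.cosh_pos x
  have h1 : Real.cosh x ^ 2 - Real.sinh x ^ 2 = 1 := Real.cosh_sq_sub_sinh_sq x
  rw [Real.tanh_eq_sinh_div_cosh, div_pow, div_lt_one (by positivity)]
  nlinarith

lemma sign_const' {f : ℝ → ℝ} (hf : Continuous f) (hne : ∀ y, f y ≠ 0)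
    {a : ℝ} (ha : 0 < f a) (b : ℝ) : 0 < f b := by
  by_contra h
  push_neg at h
  have hb : f b < 0 := lt_of_le_of_ne h (hne b)
  have h0 : (0:ℝ) ∈ Set.uIcc (f a) (f b) := by
    rw [Set.mem_uIcc]; right; exact ⟨hb.le, ha.le⟩
  obtain ⟨z, _, hz⟩ := intermediate_value_uIcc (hf.continuousOn) h0
  exact hne z hz

theorem kink_unique (H : ℝ → ℝ)
    (hC2 : ContDiff ℝ 2 H)
    (hbdd : ∃ M : ℝ, ∀ y : ℝ, |H y| ≤ M)
    (hodd : ∀ y : ℝ, H (-y) = -H y)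
    (hODE : ∀ y : ℝ, -(deriv (deriv H) y) = H y - (H y) ^ 3)
    (hne : H ≠ 0)
    (hlim : Filter.Tendsto H Filter.atTop (nhds 1)) :
    ∀ y : ℝ, H y = Real.tanh (y / Real.sqrt 2) := by
  obtain ⟨M, hM⟩ := hbdd
  have hM0 : 0 ≤ M := le_trans (abs_nonneg _) (hM 0)
  have hH0 : H 0 = 0 := by have := hodd 0; simp at this; linarith
  have hdH : Differentiable ℝ H := hC2.differentiable (by norm_num)
  have hder1 : ContDiff ℝ 1 (deriv H) := by
    have h2 : ContDiff ℝ (1 + 1) H := by exact_mod_cast hC2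
    exact (contDiff_succ_iff_deriv.mp h2).2.2
  have hdH' : Differentiable ℝ (deriv H) := hder1.differentiable (by norm_num)
  set E : ℝ → ℝ := fun y => (deriv H y)^2 + (H y)^2 - (H y)^4/2 with hEdef
  have hEderiv : ∀ y, HasDerivAt E 0 y := by
    intro y
    have hH : HasDerivAt H (deriv H y) y := (hdH y).hasDerivAt
    have hH' : HasDerivAt (deriv H) (deriv (deriv H) y) y := (hdH' y).hasDerivAt
    have hode : deriv (deriv H) y = (H y)^3 - H y := by have := hODE y; linarith
    have h := ((hH'.pow 2).add (hH.pow 2)).sub ((hH.pow 4).div_const 2)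
    refine h.congr_deriv (Eq.symm ?_)
    rw [hode]; push_cast; ring
  have hEconst : ∀ y, E y = E 0 := fun y =>
    is_const_of_deriv_eq_zero (fun x => (hEderiv x).differentiableAt)
      (fun x => (hEderiv x).deriv) y 0
  set c : ℝ := E 0 with hcdef
  have hkey : ∀ y, deriv H y ^ 2 = (c - 1/2) + (1 - H y^2)^2/2 := by
    intro y
    have h := hEconst y
    simp only [hEdef] at h
    linear_combination h
  -- the energy level is 1/2
  have hlim2 : Tendsto (fun y => deriv H y ^ 2) atTop (nhds (c - 1/2)) := by
    have h0 : Tendsto (fun y => (c - 1/2) + (1 - H y^2)^2/2) atTop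
        (nhds ((c-1/2) + (1 - 1^2)^2/2)) :=
      tendsto_const_nhds.add
        (((tendsto_const_nhds.sub (hlim.pow 2)).pow 2).div_const 2)
    have heq : (fun y => deriv H y ^ 2) = fun y => (c - 1/2) + (1 - H y^2)^2/2 :=
      funext hkey
    rw [heq]
    convert h0 using 2
    norm_num
  have hL0 : 0 ≤ c - 1/2 := ge_of_tendsto' hlim2 (fun y => sq_nonneg _)
  have hLeq : c - 1/2 = 0 := by
    by_contra hL
    have hLpos : 0 < c - 1/2 := lt_of_le_of_ne hL0 (Ne.symm hL)
    have hge : ∀ y, c - 1/2 ≤ deriv H y ^ 2 := fun y => by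
      nlinarith [hkey y, sq_nonneg (1 - H y^2)]
    have hne0 : ∀ y, deriv H y ≠ 0 := by
      intro y h
      have := hge y
      rw [h] at this
      nlinarith
    set s : ℝ := Real.sqrt (c - 1/2) with hsdef
    have hs : 0 < s := Real.sqrt_pos.mpr hLpos
    have habs : ∀ y, s ≤ |deriv H y| := by
      intro y
      rw [hsdef, ← Real.sqrt_sq_eq_abs]
      exact Real.sqrt_le_sqrt (hge y)
    rcases lt_or_gt_of_ne (hne0 0) with hneg | hpos
    · -- derivative negative everywhere : H → -∞
      have hallneg : ∀ y, deriv H y < 0 := by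
        intro y
        have := sign_const' (f := fun y => -deriv H y) hdH'.continuous.neg
          (fun z hz => hne0 z (neg_eq_zero.mp hz)) (by simpa using hneg) y
        simpa using this
      have hle : ∀ y, deriv H y ≤ -s := by
        intro y
        have h1 := habs y
        rw [abs_of_neg (hallneg y)] at h1
        linarith
      have hsub : ∀ x y : ℝ, x ≤ y → H y - H x ≤ -s * (y - x) :=
        fun x y hxy => image_sub_le_mul_sub_of_deriv_le hdH (fun z => hle z) hxy
      have hHb : ∀ᶠ y in atTop, H y ≤ H 0 + -(s * y) := by
        filter_upwards [eventually_ge_atTop 0] with y hy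
        have := hsub 0 y hy
        nlinarith
      have hbot : Tendsto (fun y => H 0 + -(s * y)) atTop atBot :=
        tendsto_atBot_add_const_left _ _
          (tendsto_neg_atBot_iff.mpr (tendsto_id.const_mul_atTop hs))
      exact not_tendsto_atBot_of_tendsto_nhds hlim (tendsto_atBot_mono' atTop hHb hbot)
    · have hallpos : ∀ y, 0 < deriv H y :=
        sign_const' hdH'.continuous hne0 hpos
      have hle : ∀ y, s ≤ deriv H y := by
        intro y
        have h1 := habs y
        rw [abs_of_pos (hallpos y)] at h1
        linarith
      have hsub : ∀ x y : ℝ, x ≤ y → s * (y - x) ≤ H y - H x :=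
        fun x y hxy => mul_sub_le_image_sub_of_le_deriv hdH (fun z => hle z) hxy
      have hHb : ∀ᶠ y in atTop, H 0 + s * y ≤ H y := by
        filter_upwards [eventually_ge_atTop 0] with y hy
        have := hsub 0 y hy
        nlinarith
      have htop : Tendsto (fun y => H 0 + s * y) atTop atTop :=
        tendsto_atTop_add_const_left _ _ (tendsto_id.const_mul_atTop hs)
      exact not_tendsto_atTop_of_tendsto_nhds hlim (tendsto_atTop_mono' atTop hHb htop)
  have key2 : ∀ y, deriv H y ^ 2 = (1 - H y^2)^2/2 := by
    intro y
    have := hkey y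
    rw [hLeq] at this
    linarith
  -- |H| never reaches 1
  have hGne : ∀ a, 1 - H a ^ 2 ≠ 0 := by
    intro a ha
    have ha' : 1 - H |a| ^ 2 = 0 := by
      rcases abs_cases a with ⟨h1, _⟩ | ⟨h1, _⟩
      · rwa [h1]
      · rw [h1, hodd]; linear_combination ha
    set b : ℝ := |a| with hbdef
    have hb0 : 0 ≤ b := abs_nonneg a
    set k : ℝ → ℝ := fun s => 1 - H (b - s) ^ 2 with hkdef
    have hkd : ∀ s, HasDerivAt k (2 * H (b - s) * deriv H (b - s)) s := by
      intro s
      have h1 : HasDerivAt (fun s : ℝ => b - s) (-1) s := (hasDerivAt_id s).const_sub b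
      have hcomp : HasDerivAt (fun s => H (b - s)) (deriv H (b - s) * (-1)) s :=
        ((hdH (b - s)).hasDerivAt).comp s h1
      have h2 := (hcomp.pow 2).const_sub 1
      refine h2.congr_deriv (Eq.symm ?_)
      push_cast; ring
    have hkcont : ContinuousOn k (Set.Icc 0 b) :=
      (continuous_const.sub ((hdH.continuous.comp
        (continuous_const.sub continuous_id)).pow 2)).continuousOn
    have hbound : ∀ s ∈ Set.Ico 0 b,
        ‖2 * H (b - s) * deriv H (b - s)‖ ≤ (2*M) * ‖k s‖ + 0 := by
      intro s _
      have hd : |deriv H (b - s)| ≤ |1 - H (b - s) ^ 2| := by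
        rw [← Real.sqrt_sq_eq_abs, ← Real.sqrt_sq_eq_abs (x := 1 - H (b - s) ^ 2)]
        apply Real.sqrt_le_sqrt
        nlinarith [key2 (b - s), sq_nonneg (1 - H (b - s) ^ 2)]
      have hks : ‖k s‖ = |1 - H (b - s) ^ 2| := by rw [hkdef, Real.norm_eq_abs]
      rw [Real.norm_eq_abs, abs_mul, abs_mul, abs_two, hks]
      nlinarith [hM (b - s), abs_nonneg (H (b - s)), abs_nonneg (deriv H (b - s)),
        abs_nonneg (1 - H (b - s) ^ 2)]
    have hk0 : ‖k 0‖ ≤ 0 := by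
      have : k 0 = 0 := by rw [hkdef]; simp only [sub_zero]; exact ha'
      rw [this]; simp
    have hfinal := norm_le_gronwallBound_of_norm_deriv_right_le hkcont
      (fun x _ => (hkd x).hasDerivWithinAt) hk0 hbound b ⟨hb0, le_refl b⟩
    rw [gronwallBound_ε0_δ0] at hfinal
    have : k b = 1 := by rw [hkdef]; simp [hH0]
    rw [this] at hfinal
    norm_num at hfinal
  have hGpos : ∀ y, 0 < 1 - H y ^ 2 :=
    sign_const' (continuous_const.sub (hdH.continuous.pow 2)) hGne (by rw [hH0]; norm_num)
  -- derivative is positive everywhere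
  have hne0 : ∀ y, deriv H y ≠ 0 := by
    intro y h
    have := key2 y
    rw [h] at this
    nlinarith [hGpos y]
  have hallpos : ∀ y, 0 < deriv H y := by
    rcases lt_or_gt_of_ne (hne0 0) with hneg | hpos
    · exfalso
      have hallneg : ∀ y, deriv H y < 0 := by
        intro y
        have := sign_const' (f := fun y => -deriv H y) hdH'.continuous.neg
          (fun z hz => hne0 z (neg_eq_zero.mp hz)) (by simpa using hneg) y
        simpa using this
      have hanti : StrictMono (fun y => -H y) := by
        apply strictMono_of_deriv_pos
        intro x
        rw [deriv.fun_neg]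
        simpa using hallneg x
      have hH1 : H 1 < 0 := by
        have := hanti (show (0:ℝ) < 1 by norm_num)
        simp only [] at this
        linarith [hH0, this]
      have hev : ∀ᶠ y in atTop, H y ≤ H 1 := by
        filter_upwards [eventually_ge_atTop 1] with y hy
        rcases eq_or_lt_of_le hy with h | h
        · rw [← h]
        · have := hanti h; simp only [] at this; linarith
      have := le_of_tendsto hlim hev
      linarith
    · exact sign_const' hdH'.continuous hne0 hpos
  have hderiv_eq : ∀ y, deriv H y = (1 - H y ^ 2) / Real.sqrt 2 := by
    intro y
    have h2 : (0:ℝ) < Real.sqrt 2 := by positivity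
    have hsq : (deriv H y) ^ 2 = ((1 - H y ^ 2) / Real.sqrt 2) ^ 2 := by
      rw [div_pow, Real.sq_sqrt (by norm_num : (0:ℝ) ≤ 2)]
      linarith [key2 y]
    have hpos2 : 0 < (1 - H y ^ 2) / Real.sqrt 2 := div_pos (hGpos y) h2
    calc deriv H y = Real.sqrt ((deriv H y) ^ 2) := (Real.sqrt_sq (hallpos y).le).symm
      _ = Real.sqrt (((1 - H y ^ 2) / Real.sqrt 2) ^ 2) := by rw [hsq]
      _ = (1 - H y ^ 2) / Real.sqrt 2 := Real.sqrt_sq hpos2.le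
  -- conclude via uniqueness of the first-order ODE
  have habsH : ∀ y, |H y| ≤ 1 := by
    intro y
    have h := hGpos y
    have h2 := sq_abs (H y)
    nlinarith [abs_nonneg (H y)]
  set G : ℝ → ℝ := fun y => Real.tanh (y / Real.sqrt 2) with hGdef
  have habsG : ∀ y, |G y| ≤ 1 := by
    intro y
    have h := tanh_sq_lt_one' (y / Real.sqrt 2)
    have h2 := sq_abs (Real.tanh (y / Real.sqrt 2))
    have h3 := abs_nonneg (Real.tanh (y / Real.sqrt 2))
    nlinarith
  have hGd : ∀ y, HasDerivAt G ((1 - G y ^ 2) / Real.sqrt 2) y := by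
    intro y
    have h1 : HasDerivAt (fun y : ℝ => y / Real.sqrt 2) (1 / Real.sqrt 2) y := by
      simpa using (hasDerivAt_id y).div_const (Real.sqrt 2)
    have h2 := (tanh_hasDerivAt' (y / Real.sqrt 2)).comp y h1
    refine h2.congr_deriv (Eq.symm ?_)
    rw [mul_one_div]
  set v : ℝ → ℝ → ℝ := fun _ x => (1 - (max (min 1 x) (-1)) ^ 2) / Real.sqrt 2 with hvdef
  have hclamp : ∀ x : ℝ, |x| ≤ 1 → max (min 1 x) (-1) = x := by
    intro x hx
    rw [abs_le] at hx
    rw [min_eq_right hx.2, max_eq_left hx.1]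
  have hlip : ∀ t : ℝ, LipschitzWith 2 (v t) := by
    intro t
    apply LipschitzWith.of_dist_le_mul
    intro x y
    have h2 : (1:ℝ) ≤ Real.sqrt 2 := by
      rw [show (1:ℝ) = Real.sqrt 1 by simp]
      exact Real.sqrt_le_sqrt (by norm_num)
    set cx : ℝ := max (min 1 x) (-1) with hcx
    set cy : ℝ := max (min 1 y) (-1) with hcy
    have hcx1 : |cx| ≤ 1 := by
      rw [abs_le]
      exact ⟨le_max_right _ _, max_le (min_le_left _ _) (by norm_num)⟩
    have hcy1 : |cy| ≤ 1 := by
      rw [abs_le]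
      exact ⟨le_max_right _ _, max_le (min_le_left _ _) (by norm_num)⟩
    have hlc : |cx - cy| ≤ |x - y| := by
      calc |cx - cy| ≤ |min 1 x - min 1 y| := abs_max_sub_max_le_abs _ _ _
        _ ≤ max |1 - 1| |x - y| := abs_min_sub_min_le_max _ _ _ _
        _ = |x - y| := by simp [abs_nonneg]
    have key : |v t x - v t y| ≤ 2 * |x - y| := by
      have hexp : v t x - v t y = ((cy - cx) * (cy + cx)) / Real.sqrt 2 := by
        simp only [hvdef]
        rw [div_sub_div_same]
        congr 1
        ring
      rw [hexp, abs_div, abs_mul, abs_of_pos (show (0:ℝ) < Real.sqrt 2 by positivity),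
        div_le_iff₀ (show (0:ℝ) < Real.sqrt 2 by positivity)]
      have h4 : |cy + cx| ≤ 2 := by
        calc |cy + cx| ≤ |cy| + |cx| := abs_add_le _ _
          _ ≤ 2 := by linarith
      have h5 : |cy - cx| ≤ |x - y| := by rw [abs_sub_comm]; exact hlc
      nlinarith [abs_nonneg (cy - cx), abs_nonneg (cy + cx), abs_nonneg (x - y)]
    rw [Real.dist_eq, Real.dist_eq]
    refine le_trans key (le_of_eq ?_)
    norm_num
  have hG0 : G 0 = 0 := by
    simp only [hGdef, zero_div]
    simp [Real.tanh_eq_sinh_div_cosh]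
  have main : ∀ y : ℝ, 0 ≤ y → H y = G y := by
    intro y hy
    have hfd : ∀ t ∈ Set.Ico 0 y, HasDerivWithinAt H (v t (H t)) (Set.Ici t) t := by
      intro t _
      have hv : v t (H t) = deriv H t := by
        simp only [hvdef]
        rw [hclamp _ (habsH t), ← hderiv_eq t]
      rw [hv]
      exact ((hdH t).hasDerivAt).hasDerivWithinAt
    have hgd : ∀ t ∈ Set.Ico 0 y, HasDerivWithinAt G (v t (G t)) (Set.Ici t) t := by
      intro t _
      have hv : v t (G t) = (1 - G t ^ 2) / Real.sqrt 2 := by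
        simp only [hvdef]
        rw [hclamp _ (habsG t)]
      rw [hv]
      exact (hGd t).hasDerivWithinAt
    have heq := ODE_solution_unique hlip hdH.continuous.continuousOn hfd
      ((continuous_iff_continuousAt.mpr (fun t => (hGd t).continuousAt)).continuousOn) hgd
      (by rw [hH0, hG0])
    exact heq ⟨hy, le_refl y⟩
  intro y
  rcases le_or_gt 0 y with hy | hy
  · exact main y hy
  · have h1 : H (-y) = G (-y) := main (-y) (by linarith)
    have h2 : H y = -H (-y) := by rw [hodd]; ring
    rw [h2, h1, hGdef]
    simp only []
    rw [neg_div, Real.tanh_neg, neg_neg]
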